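/- arXiv:1204.5059 — 5 statements merged into one kernel-verified Lean document; each statement's English description precedes it below -/
import Mathlib

section
/- For positive integers b ≤ n, every bipartite graph with n vertices on each side and at least (b−1)^{1/b}(n−b+1)n^{1−1/b} + (b−1)n + 1 edges contains a complete bipartite subgraph K_{b,b}. -/
open Finset

lemma kst_choose_aux (b d n : ℕ) (hb : 0 < b) (hbn : b ≤ n) (hdn : d ≤ n) :
    (max ((d:ℝ) - b + 1) 0) ^ b * (n.choose b : ℝ)
      ≤ ((n:ℝ) - b + 1) ^ b * (d.choose b : ℝ) := by
  have hbnR : (b:ℝ) ≤ n := by exact_mod_cast hbn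
  have hdnR : (d:ℝ) ≤ n := by exact_mod_cast hdn
  rcases lt_or_ge d b with hdb | hbd
  · have hdbR : (d:ℝ) + 1 ≤ b := by exact_mod_cast hdb
    rw [max_eq_right (by linarith), zero_pow hb.ne', zero_mul]
    have h1 : (0:ℝ) ≤ ((n:ℝ) - b + 1) ^ b := by apply pow_nonneg; linarith
    have h2 : (0:ℝ) ≤ (d.choose b : ℝ) := by positivity
    exact mul_nonneg h1 h2
  · have hbdR : (b:ℝ) ≤ d := by exact_mod_cast hbd
    rw [max_eq_left (by linarith)]
    have hcast : ∀ m : ℕ, b ≤ m → ((m.choose b : ℝ)) * (b.factorial : ℝ)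
        = ∏ i ∈ range b, ((m:ℝ) - i) := by
      intro m hm
      have h1 : (m.descFactorial b : ℝ) = ∏ i ∈ range b, ((m:ℝ) - i) := by
        rw [Nat.descFactorial_eq_prod_range]
        push_cast
        refine Finset.prod_congr rfl fun i hi => ?_
        rw [Nat.cast_sub (le_trans (Nat.le_of_lt_succ (Nat.lt_succ_of_lt (mem_range.1 hi))) hm)]
      rw [← h1, Nat.descFactorial_eq_factorial_mul_choose]
      push_cast; ring
    have hprod : ∏ i ∈ range b, (((d:ℝ) - b + 1) * ((n:ℝ) - i))
        ≤ ∏ i ∈ range b, (((n:ℝ) - b + 1) * ((d:ℝ) - i)) := by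
      apply Finset.prod_le_prod
      · intro i hi
        have hi' : (i:ℝ) + 1 ≤ b := by exact_mod_cast mem_range.1 hi
        have : (0:ℝ) ≤ (d:ℝ) - b + 1 := by linarith
        have : (0:ℝ) ≤ (n:ℝ) - i := by linarith
        positivity
      · intro i hi
        have h1 : (i:ℝ) + 1 ≤ b := by exact_mod_cast mem_range.1 hi
        nlinarith [mul_nonneg (sub_nonneg.2 hdnR) (by linarith : (0:ℝ) ≤ (b:ℝ) - 1 - i)]
    rw [Finset.prod_mul_distrib, Finset.prod_mul_distrib, Finset.prod_const,
      Finset.prod_const, card_range, ← hcast n hbn, ← hcast d hbd,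
      ← mul_assoc, ← mul_assoc] at hprod
    have hfac : (0:ℝ) < (b.factorial : ℝ) := by exact_mod_cast b.factorial_pos
    exact le_of_mul_le_mul_right hprod hfac

lemma kst_count (b n : ℕ) (hb : 0 < b) (E : Finset (Fin n × Fin n))
    (hcon : ∀ S T : Finset (Fin n), S.card = b → T.card = b →
      ∃ s ∈ S, ∃ t ∈ T, (s, t) ∉ E) :
    ∑ s : Fin n, ((univ.filter fun t => (s, t) ∈ E).card.choose b)
      ≤ (b - 1) * n.choose b := by
  set N : Fin n → Finset (Fin n) := fun s => univ.filter fun t => (s, t) ∈ E with hN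
  have hsub : ∀ s, (N s).powersetCard b
      = (univ.powersetCard b).filter fun T => T ⊆ N s := by
    intro s
    ext T
    simp only [mem_powersetCard, mem_filter, subset_univ, true_and]
    tauto
  calc ∑ s : Fin n, ((N s).card.choose b)
      = ∑ s : Fin n, ((N s).powersetCard b).card := by
        simp [Finset.card_powersetCard]
    _ = ∑ s : Fin n, ∑ T ∈ univ.powersetCard b, if T ⊆ N s then 1 else 0 := by
        refine Finset.sum_congr rfl fun s _ => ?_
        rw [hsub s, Finset.card_filter]
    _ = ∑ T ∈ univ.powersetCard b, ∑ s : Fin n, if T ⊆ N s then 1 else 0 :=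
        Finset.sum_comm
    _ ≤ ∑ T ∈ univ.powersetCard b, (b - 1) := by
        refine Finset.sum_le_sum fun T hT => ?_
        rw [← Finset.card_filter]
        by_contra hlt
        push_neg at hlt
        obtain ⟨S, hSsub, hScard⟩ :=
          Finset.exists_subset_card_eq (s := univ.filter fun i => T ⊆ N i) (n := b) (by omega)
        obtain ⟨hTcard⟩ : T.card = b ∧ True := ⟨(mem_powersetCard.1 hT).2, trivial⟩
        obtain ⟨s, hs, t, ht, hst⟩ := hcon S T hScard hTcard
        have := hSsub hs
        rw [mem_filter] at this
        exact hst (by simpa [hN] using this.2 ht)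
    _ = (b - 1) * n.choose b := by
        rw [Finset.sum_const, Finset.card_powersetCard, card_univ, Fintype.card_fin,
          smul_eq_mul, mul_comm]

/-- **Kővári–Sós–Turán.** For positive integers `b ≤ n`, every bipartite graph with
`n` vertices on each side and at least `(b-1)^{1/b}(n-b+1)n^{1-1/b} + (b-1)n + 1` edges contains
a complete bipartite subgraph `K_{b,b}`. -/
theorem kovari_sos_turan (b n : ℕ) (hb : 0 < b) (hbn : b ≤ n)
    (E : Finset (Fin n × Fin n))
    (hE : ((b : ℝ) - 1) ^ ((1 : ℝ) / b) * ((n : ℝ) - b + 1) * (n : ℝ) ^ (1 - (1 : ℝ) / b)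
        + ((b : ℝ) - 1) * n + 1 ≤ (E.card : ℝ)) :
    ∃ S T : Finset (Fin n), S.card = b ∧ T.card = b ∧
      ∀ s ∈ S, ∀ t ∈ T, (s, t) ∈ E := by
  by_contra hcon
  push_neg at hcon
  have hcon' : ∀ S T : Finset (Fin n), S.card = b → T.card = b →
      ∃ s ∈ S, ∃ t ∈ T, (s, t) ∉ E := by
    intro S T hS hT
    obtain ⟨s, hs, t, ht, hst⟩ := hcon S T hS hT
    exact ⟨s, hs, t, ht, hst⟩
  set d : Fin n → ℕ := fun s => (univ.filter fun t => (s, t) ∈ E).card with hd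
  have hnpos : 0 < n := lt_of_lt_of_le hb hbn
  have hnR : (0:ℝ) < n := by exact_mod_cast hnpos
  have hbnR : (b:ℝ) ≤ n := by exact_mod_cast hbn
  have hb1R : (1:ℝ) ≤ b := by exact_mod_cast hb
  have hbne : (b:ℝ) ≠ 0 := by positivity
  -- edge count
  have hm : E.card = ∑ s : Fin n, d s := by
    rw [Finset.card_eq_sum_card_fiberwise (f := Prod.fst) (t := univ) (fun x _ => mem_univ _)]
    refine Finset.sum_congr rfl fun s _ => ?_
    refine Finset.card_bij (fun e _ => e.2) ?_ ?_ ?_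
    · intro e he
      simp only [mem_filter, mem_univ, true_and] at he ⊢
      rw [← he.2]
      exact he.1
    · intro e₁ h₁ e₂ h₂ h
      simp only [mem_filter] at h₁ h₂
      exact Prod.ext (h₁.2.trans h₂.2.symm) h
    · intro t ht
      simp only [mem_filter, mem_univ, true_and] at ht
      exact ⟨(s, t), by simp [ht], rfl⟩
  -- key counting bound
  have hcount := kst_count b n hb E hcon'
  have hC : (0:ℝ) < (n.choose b : ℝ) := by exact_mod_cast Nat.choose_pos hbn
  set z : Fin n → ℝ := fun s => max ((d s : ℝ) - b + 1) 0 with hz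
  have hzsum : ∑ s : Fin n, z s ^ b ≤ ((b:ℝ) - 1) * ((n:ℝ) - b + 1) ^ b := by
    have h1 : (∑ s : Fin n, z s ^ b) * (n.choose b : ℝ)
        ≤ ((n:ℝ) - b + 1) ^ b * ∑ s : Fin n, ((d s).choose b : ℝ) := by
      rw [Finset.sum_mul, Finset.mul_sum]
      refine Finset.sum_le_sum fun s _ => ?_
      exact kst_choose_aux b (d s) n hb hbn
        (le_trans (Finset.card_filter_le _ _) (by simp))
    have h2 : ∑ s : Fin n, ((d s).choose b : ℝ) ≤ ((b:ℝ) - 1) * (n.choose b : ℝ) := by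
      have := hcount
      have hcast : (((b - 1) * n.choose b : ℕ) : ℝ) = ((b:ℝ) - 1) * (n.choose b : ℝ) := by
        push_cast [Nat.cast_sub hb]
        ring
      calc ∑ s : Fin n, ((d s).choose b : ℝ)
          = ((∑ s : Fin n, (d s).choose b : ℕ) : ℝ) := by push_cast; rfl
        _ ≤ (((b - 1) * n.choose b : ℕ) : ℝ) := by exact_mod_cast hcount
        _ = ((b:ℝ) - 1) * (n.choose b : ℝ) := hcast
    have h3 : (∑ s : Fin n, z s ^ b) * (n.choose b : ℝ)
        ≤ (((b:ℝ) - 1) * ((n:ℝ) - b + 1) ^ b) * (n.choose b : ℝ) := by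
      calc (∑ s : Fin n, z s ^ b) * (n.choose b : ℝ)
          ≤ ((n:ℝ) - b + 1) ^ b * ∑ s : Fin n, ((d s).choose b : ℝ) := h1
        _ ≤ ((n:ℝ) - b + 1) ^ b * (((b:ℝ) - 1) * (n.choose b : ℝ)) := by
            apply mul_le_mul_of_nonneg_left h2
            apply pow_nonneg; linarith
        _ = (((b:ℝ) - 1) * ((n:ℝ) - b + 1) ^ b) * (n.choose b : ℝ) := by ring
    exact le_of_mul_le_mul_right h3 hC
  -- Jensen
  have hw : ∑ _s : Fin n, (1:ℝ)/n = 1 := by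
    rw [Finset.sum_const, card_univ, Fintype.card_fin, nsmul_eq_mul]
    field_simp
  have hjen := Real.pow_arith_mean_le_arith_mean_pow univ (fun _ => (1:ℝ)/n) z
    (fun i _ => by positivity) hw (fun i _ => le_max_right _ _) b
  set Y : ℝ := (E.card : ℝ)/n - b + 1 with hY
  have hfirst : 0 ≤ ((b:ℝ) - 1) ^ ((1:ℝ)/b) * ((n:ℝ) - b + 1) * (n:ℝ) ^ (1 - (1:ℝ)/b) := by
    apply mul_nonneg (mul_nonneg (Real.rpow_nonneg (by linarith) _) (by linarith))
    exact Real.rpow_nonneg hnR.le _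
  have hYpos : 0 < Y := by
    have h1 : ((b:ℝ) - 1) * n + 1 ≤ E.card := by linarith
    rw [hY]
    have h2 : ((b:ℝ) - 1) * n < E.card := by linarith
    have := (div_lt_div_iff_of_pos_right hnR).2 h2
    rw [mul_div_assoc, div_self hnR.ne'] at this
    linarith
  have hYX : Y ≤ ∑ s : Fin n, (1:ℝ)/n * z s := by
    have h1 : ∑ s : Fin n, (1:ℝ)/n * ((d s : ℝ) - b + 1) ≤ ∑ s : Fin n, (1:ℝ)/n * z s :=
      Finset.sum_le_sum fun s _ => mul_le_mul_of_nonneg_left (le_max_left _ _) (by positivity)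
    have h2 : ∑ s : Fin n, (1:ℝ)/n * ((d s : ℝ) - b + 1) = Y := by
      rw [← Finset.mul_sum, Finset.sum_add_distrib, Finset.sum_sub_distrib,
        Finset.sum_const, Finset.sum_const, card_univ, Fintype.card_fin,
        nsmul_eq_mul, nsmul_eq_mul, mul_one]
      rw [hY, hm]
      push_cast
      field_simp
    linarith
  have hYb : Y ^ b ≤ ((b:ℝ) - 1) * ((n:ℝ) - b + 1) ^ b / n := by
    calc Y ^ b ≤ (∑ s : Fin n, (1:ℝ)/n * z s) ^ b :=
          pow_le_pow_left₀ hYpos.le hYX b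
      _ ≤ ∑ s : Fin n, (1:ℝ)/n * z s ^ b := hjen
      _ = (1/n) * ∑ s : Fin n, z s ^ b := by rw [Finset.mul_sum]
      _ ≤ (1/n) * (((b:ℝ) - 1) * ((n:ℝ) - b + 1) ^ b) := by
          apply mul_le_mul_of_nonneg_left hzsum (by positivity)
      _ = ((b:ℝ) - 1) * ((n:ℝ) - b + 1) ^ b / n := by ring
  -- rpow extraction
  have hnb1 : (0:ℝ) ≤ (n:ℝ) - b + 1 := by linarith
  have hb10 : (0:ℝ) ≤ (b:ℝ) - 1 := by linarith
  have hYle : Y ≤ ((b:ℝ) - 1) ^ ((1:ℝ)/b) * ((n:ℝ) - b + 1) / (n:ℝ) ^ ((1:ℝ)/b) := by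
    have h1 : (Y ^ b : ℝ) ^ ((1:ℝ)/b) = Y := by
      rw [← Real.rpow_natCast Y b, ← Real.rpow_mul hYpos.le, mul_one_div,
        div_self hbne, Real.rpow_one]
    have h2 : ((((b:ℝ) - 1) * ((n:ℝ) - b + 1) ^ b / n) : ℝ) ^ ((1:ℝ)/b)
        = ((b:ℝ) - 1) ^ ((1:ℝ)/b) * ((n:ℝ) - b + 1) / (n:ℝ) ^ ((1:ℝ)/b) := by
      rw [Real.div_rpow (mul_nonneg hb10 (pow_nonneg hnb1 b)) hnR.le,
        Real.mul_rpow hb10 (pow_nonneg hnb1 b),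
        ← Real.rpow_natCast ((n:ℝ) - b + 1) b, ← Real.rpow_mul hnb1, mul_one_div,
        div_self hbne, Real.rpow_one]
    calc Y = (Y ^ b : ℝ) ^ ((1:ℝ)/b) := h1.symm
      _ ≤ ((((b:ℝ) - 1) * ((n:ℝ) - b + 1) ^ b / n) : ℝ) ^ ((1:ℝ)/b) :=
          Real.rpow_le_rpow (pow_nonneg hYpos.le b) hYb (by positivity)
      _ = _ := h2
  -- final arithmetic
  have hnpow : (n:ℝ) ^ (1 - (1:ℝ)/b) = n / (n:ℝ) ^ ((1:ℝ)/b) := by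
    rw [Real.rpow_sub hnR, Real.rpow_one]
  have hfin := mul_le_mul_of_nonneg_right hYle hnR.le
  have hYn : Y * n = (E.card : ℝ) - ((b:ℝ) - 1) * n := by
    rw [hY]; field_simp; ring
  have hring : ((b:ℝ) - 1) ^ ((1:ℝ)/b) * ((n:ℝ) - b + 1) / (n:ℝ) ^ ((1:ℝ)/b) * n
      = ((b:ℝ) - 1) ^ ((1:ℝ)/b) * ((n:ℝ) - b + 1) * ((n:ℝ) / (n:ℝ) ^ ((1:ℝ)/b)) := by
    ring
  rw [hnpow] at hE
  rw [hYn, hring] at hfin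
  linarith
end

section
/- If Y ≥ e³X³ and N = X² − X + 1, then (1 − (N−1)/Y) / (1 − (1 − (1 − (N−1)/Y))·e²) ≤ e^{1/X}; that is, with p_N = 1 − (N−1)/Y, we have p_N/(1 − (1−p_N)e²) ≤ e^{1/X}. -/
/-- If `Y ≥ e³X³` and `N = X² - X + 1`, then with `p_N = 1 - (N-1)/Y` we have
`p_N / (1 - (1 - p_N)·e²) ≤ e^{1/X}`. -/
theorem pN_ratio_le (X Y : ℝ) (hX : 1 ≤ X) (hY : Real.exp 3 * X ^ 3 ≤ Y)
    (N : ℝ) (hN : N = X ^ 2 - X + 1)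
    (p : ℝ) (hp : p = 1 - (N - 1) / Y) :
    p / (1 - (1 - p) * Real.exp 2) ≤ Real.exp (1 / X) := by
  set E := Real.exp 1 with hE
  have hE2 : Real.exp 2 = E ^ 2 := by
    rw [show (2:ℝ) = 1 + 1 by norm_num, Real.exp_add]; ring
  have hE3 : Real.exp 3 = E ^ 3 := by
    rw [show (3:ℝ) = 1 + 1 + 1 by norm_num, Real.exp_add, Real.exp_add]; ring
  have hEgt : 2 < E := by
    have := Real.exp_one_gt_d9
    linarith
  have hX0 : (0:ℝ) < X := by linarith
  have hb0 : 0 < 1 / X := by positivity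
  have hb1 : 1 / X ≤ 1 := by
    rw [div_le_one hX0]; exact hX
  set b := 1 / X with hbdef
  have hEb : 1 + b ≤ Real.exp b := by linarith [Real.add_one_le_exp b]
  have hEbpos : 0 < Real.exp b := Real.exp_pos b
  -- key: exp b * (E - b) ≥ E
  have key1 : E ≤ Real.exp b * (E - b) := by
    have h1 : (1 + b) * (E - b) - E = b * (E - 1 - b) := by ring
    nlinarith [mul_le_mul_of_nonneg_right hEb (by linarith : (0:ℝ) ≤ E - b)]
  set q := (N - 1) / Y with hq
  have hY0 : (0:ℝ) < Y := by
    have : (0:ℝ) < Real.exp 3 * X ^ 3 := by positivity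
    linarith
  have hNum : N - 1 = X * (X - 1) := by rw [hN]; ring
  have hq0 : 0 ≤ q := by
    apply div_nonneg
    · rw [hNum]; nlinarith
    · linarith
  -- q * E^3 ≤ b, i.e. q ≤ 1/(e³ X)
  have hqE : q * E ^ 3 ≤ b := by
    have hE3pos : (0:ℝ) < E ^ 3 := by positivity
    rw [hq, hbdef, div_mul_eq_mul_div, div_le_div_iff₀ hY0 hX0]
    rw [hNum]
    have : Real.exp 3 * X ^ 3 = E ^ 3 * X ^ 3 := by rw [hE3]
    nlinarith [hY, this]
  -- denominator positive
  have hD : 0 < 1 - q * Real.exp 2 := by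
    rw [hE2]
    nlinarith [hq0, hqE, hb1, mul_nonneg (mul_nonneg hq0 (by positivity : (0:ℝ) ≤ E ^ 2)) (by linarith : (0:ℝ) ≤ E - 2)]
  have hpq : p = 1 - q := by rw [hp, hq]
  have h1p : 1 - p = q := by rw [hpq]; ring
  rw [h1p, hpq, div_le_iff₀ hD, hE2]
  -- goal: 1 - q ≤ exp b * (1 - q * E^2)
  nlinarith [key1, hqE, hq0, mul_le_mul_of_nonneg_right key1 (by positivity : (0:ℝ) ≤ E ^ 2),
    mul_le_mul_of_nonneg_right hqE (by nlinarith : (0:ℝ) ≤ Real.exp b * E ^ 2 - 1),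
    mul_pos hEbpos (by linarith : (0:ℝ) < E)]
end

section
/- In the coupon collector process with Y ≥ e³X³ distinct coupon types, each round yielding a uniformly random coupon independently, the number of rounds z needed to collect N = X² − X + 1 distinct coupons satisfies P(z > X²) ≤ exp(−(X−2)). -/
open MeasureTheory ProbabilityTheory Finset

/-- Counting lemma: the number of functions `Fin n → Fin Y` whose image has
fewer than `n - X + 1` elements is at most `n.choose X * (n ^ X * Y ^ (n - X))`. -/
lemma coupon_bad_count (n X Y : ℕ) (hn : 0 < n) (hY0 : 0 < Y) (hX : X ≤ n) :
    ((univ : Finset (Fin n → Fin Y)).filter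
        (fun v => ((univ : Finset (Fin n)).image v).card < n - X + 1)).card
      ≤ n.choose X * (n ^ X * Y ^ (n - X)) := by
  classical
  set z0 : Fin n := ⟨0, hn⟩ with hz0
  set y0 : Fin Y := ⟨0, hY0⟩ with hy0
  set D : (Fin n → Fin Y) → Finset (Fin n) :=
    fun v => univ.filter (fun i => ∃ j, j < i ∧ v j = v i) with hD
  -- each bad vector has at least X "repeat" positions
  have hDcard : ∀ v : Fin n → Fin Y,
      ((univ : Finset (Fin n)).image v).card < n - X + 1 → X ≤ (D v).card := by
    intro v hv
    have hinj : Set.InjOn v ((D v)ᶜ : Finset (Fin n)) := by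
      intro a ha b hb hab
      by_contra hne
      rcases lt_or_gt_of_ne hne with h | h
      · have hbD : b ∈ D v := by
          simp only [hD, mem_filter, mem_univ, true_and]; exact ⟨a, h, hab⟩
        simp only [Finset.coe_compl, Set.mem_compl_iff, Finset.mem_coe] at hb
        exact hb hbD
      · have haD : a ∈ D v := by
          simp only [hD, mem_filter, mem_univ, true_and]; exact ⟨b, h, hab.symm⟩
        simp only [Finset.coe_compl, Set.mem_compl_iff, Finset.mem_coe] at ha
        exact ha haD
    have h1 : ((D v)ᶜ).card ≤ ((univ : Finset (Fin n)).image v).card :=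
      Finset.card_le_card_of_injOn v (fun a _ => Finset.mem_image_of_mem v (mem_univ a)) hinj
    have h2 : ((D v)ᶜ).card = n - (D v).card := by
      rw [Finset.card_compl, Fintype.card_fin]
    have h3 : (D v).card ≤ n := by
      simpa using Finset.card_le_univ (D v)
    omega
  -- the choice of a repeat set of size X and the earlier matching index
  set S : (Fin n → Fin Y) → Finset (Fin n) := fun v =>
    if h : X ≤ (D v).card then Classical.choose (Finset.exists_subset_card_eq h) else ∅ with hS
  have hSspec : ∀ v : Fin n → Fin Y, X ≤ (D v).card →
      S v ⊆ D v ∧ (S v).card = X := by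
    intro v h
    have := Classical.choose_spec (Finset.exists_subset_card_eq h)
    simpa [hS, dif_pos h] using this
  set nxt : (Fin n → Fin Y) → Fin n → Fin n := fun v i =>
    if h : ∃ j, j < i ∧ v j = v i then Classical.choose h else i with hnxt
  have hnxtspec : ∀ (v : Fin n → Fin Y) (i : Fin n), (∃ j, j < i ∧ v j = v i) →
      nxt v i < i ∧ v (nxt v i) = v i := by
    intro v i h
    have := Classical.choose_spec h
    simpa [hnxt, dif_pos h] using this
  set φ : (Fin n → Fin Y) → Σ _ : Finset (Fin n), (Fin n → Fin n) × (Fin n → Fin Y) :=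
    fun v => ⟨S v, (fun i => if i ∈ S v then nxt v i else z0,
                    fun i => if i ∈ S v then y0 else v i)⟩ with hφ
  set T : Finset (Σ _ : Finset (Fin n), (Fin n → Fin n) × (Fin n → Fin Y)) :=
    ((univ : Finset (Fin n)).powersetCard X).sigma (fun Sv =>
      (Fintype.piFinset fun i => if i ∈ Sv then (univ : Finset (Fin n)) else {z0}) ×ˢ
      (Fintype.piFinset fun i => if i ∈ Sv then ({y0} : Finset (Fin Y)) else univ)) with hT
  have hTcard : T.card = n.choose X * (n ^ X * Y ^ (n - X)) := by
    rw [hT, Finset.card_sigma]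
    have hterm : ∀ Sv ∈ (univ : Finset (Fin n)).powersetCard X,
        ((Fintype.piFinset fun i => if i ∈ Sv then (univ : Finset (Fin n)) else {z0}) ×ˢ
         (Fintype.piFinset fun i => if i ∈ Sv then ({y0} : Finset (Fin Y)) else univ)).card
        = n ^ X * Y ^ (n - X) := by
      intro Sv hSv
      rw [Finset.mem_powersetCard] at hSv
      rw [Finset.card_product, Fintype.card_piFinset, Fintype.card_piFinset]
      have e1 : ∏ i : Fin n, ((if i ∈ Sv then (univ : Finset (Fin n)) else {z0}).card)
          = n ^ X := by
        have : ∀ i : Fin n, ((if i ∈ Sv then (univ : Finset (Fin n)) else {z0}).card)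
            = if i ∈ Sv then n else 1 := by
          intro i; split <;> simp
        rw [Finset.prod_congr rfl (fun i _ => this i)]
        rw [Finset.prod_ite_mem, Finset.univ_inter, Finset.prod_const, hSv.2]
      have e2 : ∏ i : Fin n, ((if i ∈ Sv then ({y0} : Finset (Fin Y)) else univ).card)
          = Y ^ (n - X) := by
        have : ∀ i : Fin n, ((if i ∈ Sv then ({y0} : Finset (Fin Y)) else univ).card)
            = if i ∈ Svᶜ then Y else 1 := by
          intro i
          rcases em (i ∈ Sv) with h | h <;> simp [h]
        rw [Finset.prod_congr rfl (fun i _ => this i)]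
        rw [Finset.prod_ite_mem, Finset.univ_inter, Finset.prod_const,
          Finset.card_compl, Fintype.card_fin, hSv.2]
      rw [e1, e2]
    rw [Finset.sum_congr rfl hterm, Finset.sum_const, Finset.card_powersetCard,
      Finset.card_univ, Fintype.card_fin, smul_eq_mul]
  rw [← hTcard]
  apply Finset.card_le_card_of_injOn φ
  · -- maps into T
    intro v hv
    rw [Finset.mem_coe, Finset.mem_filter] at hv
    have hXD : X ≤ (D v).card := hDcard v hv.2
    obtain ⟨hsub, hcard⟩ := hSspec v hXD
    rw [Finset.mem_coe, hT, hφ, Finset.mem_sigma]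
    constructor
    · rw [Finset.mem_powersetCard]; exact ⟨Finset.subset_univ _, hcard⟩
    · rw [Finset.mem_product]
      constructor
      · rw [Fintype.mem_piFinset]
        intro i
        rcases em (i ∈ S v) with h | h <;> simp [h]
      · rw [Fintype.mem_piFinset]
        intro i
        rcases em (i ∈ S v) with h | h <;> simp [h]
  · -- injective on bad set
    intro v hv w hw heq
    simp only [Finset.coe_filter, Set.mem_setOf_eq] at hv hw
    have hXDv : X ≤ (D v).card := hDcard v hv.2
    have hXDw : X ≤ (D w).card := hDcard w hw.2
    obtain ⟨hsubv, hcardv⟩ := hSspec v hXDv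
    obtain ⟨hsubw, hcardw⟩ := hSspec w hXDw
    rw [hφ] at heq
    simp only [Sigma.mk.inj_iff, heq_iff_eq, Prod.mk.injEq] at heq
    obtain ⟨hSeq, hfeq, hgeq⟩ := heq
    have main : ∀ k, ∀ i : Fin n, (i : ℕ) < k → v i = w i := by
      intro k
      induction k with
      | zero => intro i hi; omega
      | succ k IH =>
        intro i hik
        rcases em (i ∈ S v) with h | h
        · -- i is a repeat position for both
          have hiw : i ∈ S w := hSeq ▸ h
          have hiDv : i ∈ D v := hsubv h
          have hiDw : i ∈ D w := hsubw hiw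
          rw [hD, mem_filter] at hiDv hiDw
          obtain ⟨jv, hjv⟩ := hnxtspec v i hiDv.2
          obtain ⟨jw, hjw⟩ := hnxtspec w i hiDw.2
          have hne : nxt v i = nxt w i := by
            have := congrFun hfeq i
            simpa [h, hiw] using this
          have hlt : ((nxt v i : Fin n) : ℕ) < (i : ℕ) := jv
          have hIH : v (nxt v i) = w (nxt v i) := IH (nxt v i) (by omega)
          calc v i = v (nxt v i) := hjv.symm
            _ = w (nxt w i) := by rw [hIH, hne]
            _ = w i := hjw
        · have hiw : i ∉ S w := fun hh => h (hSeq ▸ hh)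
          have := congrFun hgeq i
          simpa [h, hiw] using this
    funext i
    exact main ((i : ℕ) + 1) i (by omega)

/-- **coupon collector tail.** With `Y ≥ e³X³` coupon types and i.i.d. uniform
draws `c 0, c 1, …`, the probability that fewer than `N = X² - X + 1` distinct coupons have been
collected after `X²` rounds (i.e. that the collection time `z` of `N` distinct coupons exceeds
`X²`) is at most `exp(-(X-2))`. -/
theorem coupon_collector_tail
    {Ω : Type*} [MeasurableSpace Ω] (μ : Measure Ω) [IsProbabilityMeasure μ]
    (X Y : ℕ) (hX : 1 ≤ X) (hYpos : 0 < Y)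
    (hY : Real.exp 3 * (X : ℝ) ^ 3 ≤ (Y : ℝ))
    (c : ℕ → Ω → Fin Y)
    (hmeas : ∀ i, Measurable (c i))
    (hindep : iIndepFun c μ)
    (hunif : ∀ i, ∀ y : Fin Y, (μ {ω | c i ω = y}).toReal = 1 / (Y : ℝ)) :
    (μ {ω | ((Finset.range (X ^ 2)).image (fun i => c i ω)).card < X ^ 2 - X + 1}).toReal ≤
      Real.exp (-((X : ℝ) - 2)) := by
  classical
  set n := X ^ 2 with hn
  have hn0 : 0 < n := by positivity
  have hXn : X ≤ n := by calc X = X * 1 := (mul_one X).symm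
    _ ≤ X * X := Nat.mul_le_mul_left X hX
    _ = n := (sq X).symm
  -- the bad set of coupon vectors
  set bad : Finset (Fin n → Fin Y) := (univ : Finset (Fin n → Fin Y)).filter
      (fun v => ((univ : Finset (Fin n)).image v).card < n - X + 1) with hbad
  -- atomic events
  set sets : (Fin n → Fin Y) → ℕ → Set Ω := fun v i =>
      if h : i < n then {ω | c i ω = v ⟨i, h⟩} else Set.univ with hsets
  set A : (Fin n → Fin Y) → Set Ω := fun v => ⋂ i ∈ Finset.range n, sets v i with hA
  have hAmem : ∀ (v : Fin n → Fin Y) (ω : Ω), ω ∈ A v ↔ ∀ i : Fin n, c i ω = v i := by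
    intro v ω
    constructor
    · intro hω i
      have := Set.mem_iInter₂.mp hω i (Finset.mem_range.mpr i.isLt)
      simpa [hsets, dif_pos i.isLt] using this
    · intro hω
      apply Set.mem_iInter₂.mpr
      intro i hi
      rw [Finset.mem_range] at hi
      simpa [hsets, dif_pos hi] using hω ⟨i, hi⟩
  -- measurability of atomic events
  have hsets_meas : ∀ v i, MeasurableSet (sets v i) := by
    intro v i
    simp only [hsets]
    by_cases h : i < n
    · rw [dif_pos h]; exact hmeas i (measurableSet_singleton _)
    · rw [dif_neg h]; exact MeasurableSet.univ
  have hAmeas : ∀ v, MeasurableSet (A v) := fun v =>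
    MeasurableSet.biInter (Set.to_countable _) (fun i _ => hsets_meas v i)
  -- probability of an atomic event
  have hAprob : ∀ v, (μ (A v)).toReal = (1 / (Y : ℝ)) ^ n := by
    intro v
    have hcomap : ∀ i ∈ Finset.range n,
        MeasurableSet[(inferInstance : MeasurableSpace (Fin Y)).comap (c i)] (sets v i) := by
      intro i hi
      rw [Finset.mem_range] at hi
      refine ⟨{v ⟨i, hi⟩}, measurableSet_singleton _, ?_⟩
      simp only [hsets]; rw [dif_pos hi]; rfl
    have := hindep.meas_biInter hcomap
    rw [hA, this, ENNReal.toReal_prod]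
    have : ∀ i ∈ Finset.range n, (μ (sets v i)).toReal = 1 / (Y : ℝ) := by
      intro i hi
      rw [Finset.mem_range] at hi
      simp only [hsets]; rw [dif_pos hi]
      exact hunif i _
    rw [Finset.prod_congr rfl this, Finset.prod_const, Finset.card_range]
  -- the event as a disjoint union
  have hE : {ω | ((Finset.range (X ^ 2)).image (fun i => c i ω)).card < X ^ 2 - X + 1}
      = ⋃ v ∈ bad, A v := by
    ext ω
    simp only [Set.mem_setOf_eq, Set.mem_iUnion]
    constructor
    · intro hω
      refine ⟨fun i => c i ω, ?_, (hAmem _ ω).mpr (fun i => rfl)⟩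
      rw [hbad, Finset.mem_filter]
      refine ⟨Finset.mem_univ _, ?_⟩
      have himg : (univ : Finset (Fin n)).image (fun i : Fin n => c (i : ℕ) ω)
          = (Finset.range n).image (fun i => c i ω) := by
        ext y
        simp only [Finset.mem_image, Finset.mem_univ, true_and, Finset.mem_range]
        constructor
        · rintro ⟨i, hi⟩; exact ⟨i, i.isLt, hi⟩
        · rintro ⟨i, hi, hy⟩; exact ⟨⟨i, hi⟩, hy⟩
      rw [himg]; exact hω
    · rintro ⟨v, hv, hω⟩
      have hveq : ∀ i : Fin n, c i ω = v i := (hAmem v ω).mp hω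
      rw [hbad, Finset.mem_filter] at hv
      have himg : (univ : Finset (Fin n)).image v = (Finset.range n).image (fun i => c i ω) := by
        ext y
        simp only [Finset.mem_image, Finset.mem_univ, true_and, Finset.mem_range]
        constructor
        · rintro ⟨i, hi⟩; exact ⟨i, i.isLt, (hveq i).trans hi⟩
        · rintro ⟨i, hi, hy⟩; exact ⟨⟨i, hi⟩, (hveq ⟨i, hi⟩).symm.trans hy⟩
      rw [← himg]; exact hv.2
  -- disjointness
  have hdisj : (bad : Set (Fin n → Fin Y)).PairwiseDisjoint A := by
    intro v _ w _ hvw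
    rw [Function.onFun, Set.disjoint_left]
    intro ω hv hw
    exact hvw (funext fun i => ((hAmem v ω).mp hv i).symm.trans ((hAmem w ω).mp hw i))
  have hsum : μ (⋃ v ∈ bad, A v) = ∑ v ∈ bad, μ (A v) :=
    measure_biUnion_finset hdisj (fun v _ => hAmeas v)
  have hmain : (μ {ω | ((Finset.range (X ^ 2)).image (fun i => c i ω)).card < X ^ 2 - X + 1}).toReal
      = (bad.card : ℝ) * (1 / (Y : ℝ)) ^ n := by
    rw [hE, hsum, ENNReal.toReal_sum (fun v _ => measure_ne_top μ _)]
    rw [Finset.sum_congr rfl (fun v _ => hAprob v), Finset.sum_const, nsmul_eq_mul]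
  rw [hmain]
  -- counting bound
  have hcount : (bad.card : ℝ) ≤ (n.choose X : ℝ) * ((n : ℝ) ^ X * (Y : ℝ) ^ (n - X)) := by
    have h0 := coupon_bad_count n X Y hn0 hYpos hXn
    rw [hbad]
    exact_mod_cast h0
  have hYr : (0:ℝ) < Y := by exact_mod_cast hYpos
  have hx0 : (0:ℝ) < X := by exact_mod_cast hX
  have e3 : (0:ℝ) < Real.exp 3 := Real.exp_pos 3
  have hxy : (X:ℝ)^3 / Y ≤ Real.exp (-3) := by
    rw [div_le_iff₀ hYr, Real.exp_neg, inv_mul_eq_div, le_div_iff₀ e3]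
    linarith [hY, mul_comm ((X:ℝ)^3) (Real.exp 3)]
  calc (bad.card : ℝ) * (1/(Y:ℝ))^n
      ≤ ((n.choose X : ℝ) * ((n:ℝ)^X * (Y:ℝ)^(n-X))) * (1/(Y:ℝ))^n :=
        mul_le_mul_of_nonneg_right hcount (by positivity)
    _ = (n.choose X : ℝ) * (n:ℝ)^X / (Y:ℝ)^X := by
        have h1 : (Y:ℝ)^n = (Y:ℝ)^(n-X) * (Y:ℝ)^X := by rw [← pow_add]; congr 1; omega
        field_simp
        have ha : (Y:ℝ)^(n-X) ≠ 0 := by positivity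
        have hb : (Y:ℝ)^X ≠ 0 := by positivity
        rw [one_div, inv_pow, h1, mul_inv]; field_simp
    _ ≤ ((n:ℝ)^X / (X.factorial : ℝ)) * (n:ℝ)^X / (Y:ℝ)^X := by
        gcongr
        exact Nat.choose_le_pow_div X n
    _ = ((X:ℝ)^X / (X.factorial : ℝ)) * (((X:ℝ)^3)^X / (Y:ℝ)^X) := by
        have hnr : (n:ℝ) = (X:ℝ)^2 := by rw [hn]; push_cast; ring
        rw [hnr, ← pow_mul, ← pow_mul]
        have hfp : (0:ℝ) < (X.factorial : ℝ) := by exact_mod_cast X.factorial_pos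
        field_simp
        rw [← pow_mul, ← pow_add]
        congr 1
        omega
    _ ≤ Real.exp X * (((X:ℝ)^3)^X / (Y:ℝ)^X) := by
        gcongr
        exact Real.pow_div_factorial_le_exp (hx := le_of_lt hx0) (n := X)
    _ = Real.exp X * ((X:ℝ)^3 / (Y:ℝ))^X := by rw [div_pow]
    _ ≤ Real.exp X * (Real.exp (-3))^X := by
        gcongr
    _ = Real.exp ((X:ℝ) + (X:ℝ) * (-3)) := by
        rw [← Real.exp_nat_mul, ← Real.exp_add]
    _ ≤ Real.exp (-((X : ℝ) - 2)) := by
        apply Real.exp_le_exp.mpr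
        linarith
end

section
/- Fix a c-balanced target function A with partition W₁, W₂ and a fixed U×U ordered submatrix position pattern. Let the U² entries of the submatrix S be i.i.d. uniform over an alphabet of size Y. Then the probability that S is a valid zero-error code for A (i.e., the sets of values of S at positions a⁻¹(W₁) and at positions a⁻¹(W₂) are disjoint) is at most 2·exp(−min{cU²/6, c²U⁴/(3Y)}). -/
open Finset

lemma piFinset_ite_card {α : Type*} [Fintype α] [DecidableEq α] {β : Type*} [Fintype β]
    [DecidableEq β] (A : Finset α) (t₁ t₂ : Finset β) :
    (Fintype.piFinset (fun p : α => if p ∈ A then t₁ else t₂)).card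
      = t₁.card ^ A.card * t₂.card ^ Aᶜ.card := by
  rw [Fintype.card_piFinset]
  have : ∀ i : α, #(if i ∈ A then t₁ else t₂) = if i ∈ A then #t₁ else #t₂ := by
    intro i; split <;> rfl
  simp_rw [this]
  rw [Finset.prod_ite, Finset.prod_const, Finset.prod_const]
  congr 2
  · simp [Finset.filter_mem_eq_inter]
  · simp [Finset.compl_eq_univ_sdiff, Finset.filter_not, Finset.filter_mem_eq_inter]

lemma piFinset_ite_card' {α : Type*} [Fintype α] [DecidableEq α] {β : Type*} [Fintype β]
    [DecidableEq β] (A : Finset α) (f : α → β) (t₂ : Finset β) :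
    (Fintype.piFinset (fun p : α => if p ∈ A then {f p} else t₂)).card
      = t₂.card ^ Aᶜ.card := by
  rw [Fintype.card_piFinset]
  have : ∀ i : α, #(if i ∈ A then ({f i} : Finset β) else t₂)
      = if i ∈ A then 1 else #t₂ := by
    intro i; split <;> simp
  simp_rw [this]
  rw [Finset.prod_ite, Finset.prod_const, Finset.prod_const, one_pow, one_mul]
  congr 2
  simp [Finset.compl_eq_univ_sdiff, Finset.filter_not, Finset.filter_mem_eq_inter]

set_option maxHeartbeats 3200000 in
/-- Fix a `c`-balanced target function `a` with balanced partition `W₁, W₂` of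
its range, and a fixed `U × U` submatrix position pattern. If the `U²` entries of the submatrix
`S` are i.i.d. uniform over an alphabet of size `Y`, then the probability that `S` is a valid
zero-error code for `a` (the values of `S` on `a⁻¹(W₁)` and on `a⁻¹(W₂)` are disjoint) is at most
`2·exp(-min{cU²/6, c²U⁴/(3Y)})`. -/
theorem valid_code_probability
    (U Y W : ℕ) (hY : 0 < Y) (c : ℝ) (hc0 : 0 < c) (hc1 : c ≤ 1 / 2)
    (a : Fin U → Fin U → Fin W)
    (W₁ W₂ : Finset (Fin W)) (hdisj : Disjoint W₁ W₂) (hunion : W₁ ∪ W₂ = Finset.univ)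
    (hbal₁ : c * (U : ℝ) ^ 2 ≤
      ((Finset.univ.filter (fun p : Fin U × Fin U => a p.1 p.2 ∈ W₁)).card : ℝ))
    (hbal₂ : c * (U : ℝ) ^ 2 ≤
      ((Finset.univ.filter (fun p : Fin U × Fin U => a p.1 p.2 ∈ W₂)).card : ℝ)) :
    (Nat.card {S : Fin U × Fin U → Fin Y //
        Disjoint
          ((Finset.univ.filter (fun p : Fin U × Fin U => a p.1 p.2 ∈ W₁)).image S)
          ((Finset.univ.filter (fun p : Fin U × Fin U => a p.1 p.2 ∈ W₂)).image S)} : ℝ) /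
        (Y : ℝ) ^ (U ^ 2) ≤
      2 * Real.exp (-(min (c * (U : ℝ) ^ 2 / 6) (c ^ 2 * (U : ℝ) ^ 4 / (3 * (Y : ℝ))))) := by
  classical
  set M : ℝ := min (c * (U : ℝ) ^ 2 / 6) (c ^ 2 * (U : ℝ) ^ 4 / (3 * (Y : ℝ))) with hM
  set A₁ : Finset (Fin U × Fin U) := univ.filter (fun p => a p.1 p.2 ∈ W₁) with hA₁
  set A₂ : Finset (Fin U × Fin U) := univ.filter (fun p => a p.1 p.2 ∈ W₂) with hA₂
  set n₁ : ℕ := A₁.card with hn₁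
  set n₂ : ℕ := A₂.card with hn₂
  -- rewrite Nat.card as a Finset card
  have hNat : (Nat.card {S : Fin U × Fin U → Fin Y //
      Disjoint (A₁.image S) (A₂.image S)} : ℕ)
      = (univ.filter (fun S : Fin U × Fin U → Fin Y =>
          Disjoint (A₁.image S) (A₂.image S))).card := by
    rw [Nat.card_eq_fintype_card, Fintype.card_subtype]
  rcases Nat.eq_zero_or_pos U with hU | hU
  · subst hU
    rw [hNat]
    have h1 : (univ.filter (fun S : Fin 0 × Fin 0 → Fin Y =>
        Disjoint (A₁.image S) (A₂.image S))).card ≤ 1 := by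
      refine (Finset.card_le_univ _).trans ?_
      simp [Finset.card_univ]
    have h2 : ((0:ℕ):ℝ) ^ 2 = 0 := by norm_num
    have hM0 : M = 0 := by
      rw [hM]
      norm_num
    rw [hM0]
    have h3 : ((Y:ℝ)) ^ ((0:ℕ) ^ 2) = 1 := by norm_num
    rw [h3]
    have h4 : ((univ.filter (fun S : Fin 0 × Fin 0 → Fin Y =>
        Disjoint (A₁.image S) (A₂.image S))).card : ℝ) ≤ 1 := by exact_mod_cast h1
    simp only [neg_zero, Real.exp_zero, mul_one, div_one]
    linarith
  -- main case
  have hW : ∀ w : Fin W, w ∈ W₂ ↔ w ∉ W₁ := by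
    intro w
    constructor
    · intro h hw; exact (Finset.disjoint_left.mp hdisj) hw h
    · intro h
      have hw : w ∈ W₁ ∪ W₂ := by rw [hunion]; exact mem_univ w
      rcases Finset.mem_union.mp hw with h' | h'
      · exact absurd h' h
      · exact h'
  have hsplit : A₂ = A₁ᶜ := by
    ext p
    simp only [hA₁, hA₂, mem_filter, mem_univ, true_and, Finset.mem_compl, hW]
  have hcard : n₁ + n₂ = U ^ 2 := by
    rw [hn₁, hn₂, hsplit, Finset.card_add_card_compl]
    simp [Fintype.card_prod, pow_two]
  have hU2pos : (0:ℝ) < c * (U:ℝ)^2 := by positivity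
  have hn₁pos : 0 < n₁ := by
    by_contra h
    push_neg at h
    interval_cases n₁
    · simp at hbal₁; nlinarith
  have hn₂pos : 0 < n₂ := by
    by_contra h
    push_neg at h
    interval_cases n₂
    · simp at hbal₂; nlinarith
  set m : ℕ := ⌊min ((Y:ℝ)/3) (c * (U:ℝ)^2/3)⌋₊ with hm
  have hminnn : (0:ℝ) ≤ min ((Y:ℝ)/3) (c * (U:ℝ)^2/3) := by positivity
  have hm3Y : (m:ℝ) ≤ (Y:ℝ)/3 := (Nat.floor_le hminnn).trans (min_le_left _ _)
  have hmc : (m:ℝ) ≤ c * (U:ℝ)^2/3 := (Nat.floor_le hminnn).trans (min_le_right _ _)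
  have hm1 : min ((Y:ℝ)/3) (c * (U:ℝ)^2/3) < (m:ℝ) + 1 := Nat.lt_floor_add_one _
  have hmY : m + 1 ≤ Y := by
    have h1 : (m:ℝ) < (Y:ℝ) := by
      have : (1:ℝ) ≤ Y := by exact_mod_cast hY
      linarith
    have : m < Y := by exact_mod_cast h1
    omega
  have hmn₁ : m ≤ n₁ := by
    have : (m:ℝ) ≤ (n₁:ℝ) := by linarith
    exact_mod_cast this
  set E : Finset (Fin U × Fin U → Fin Y) :=
    univ.filter (fun S => Disjoint (A₁.image S) (A₂.image S)) with hE
  set E₁ : Finset (Fin U × Fin U → Fin Y) :=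
    univ.filter (fun S => (A₁.image S).card ≤ m) with hE₁
  set E₂ : Finset (Fin U × Fin U → Fin Y) :=
    univ.filter (fun S => m + 1 ≤ (A₁.image S).card ∧
      Disjoint (A₁.image S) (A₂.image S)) with hE₂
  have hsubE : E ⊆ E₁ ∪ E₂ := by
    intro S hS
    rw [hE, mem_filter] at hS
    by_cases h : (A₁.image S).card ≤ m
    · exact Finset.mem_union_left _ (by rw [hE₁, mem_filter]; exact ⟨mem_univ _, h⟩)
    · exact Finset.mem_union_right _
        (by rw [hE₂, mem_filter]; exact ⟨mem_univ _, by omega, hS.2⟩)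
  -- bound on E₁
  have hE₁card : E₁.card ≤ Y.choose m * (m ^ n₁ * Y ^ n₂) := by
    have hsub : E₁ ⊆ (Finset.powersetCard m (univ : Finset (Fin Y))).biUnion
        (fun T => Fintype.piFinset (fun p => if p ∈ A₁ then T else univ)) := by
      intro S hS
      rw [hE₁, mem_filter] at hS
      obtain ⟨T, hsubT, hTuniv, hTcard⟩ :=
        Finset.exists_subsuperset_card_eq (Finset.subset_univ (A₁.image S)) hS.2
          (by simpa using (by omega : m ≤ Y))
      refine Finset.mem_biUnion.mpr ⟨T, ?_, ?_⟩
      · exact Finset.mem_powersetCard_univ.mpr hTcard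
      · rw [Fintype.mem_piFinset]
        intro p
        split
        · next hp => exact hsubT (Finset.mem_image_of_mem S hp)
        · exact mem_univ _
    refine (Finset.card_le_card hsub).trans ((Finset.card_biUnion_le).trans ?_)
    have : ∀ T ∈ Finset.powersetCard m (univ : Finset (Fin Y)),
        (Fintype.piFinset (fun p => if p ∈ A₁ then T else univ)).card
          = m ^ n₁ * Y ^ n₂ := by
      intro T hT
      have hTcard : T.card = m := (Finset.mem_powersetCard_univ.mp hT)
      rw [piFinset_ite_card, hTcard, ← hsplit]
      simp [hn₁, hn₂]
    rw [Finset.sum_congr rfl this, Finset.sum_const, Finset.card_powersetCard,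
      smul_eq_mul]
    simp
  -- bound on E₂
  have hE₂card : E₂.card ≤ Y ^ n₁ * (Y - (m+1)) ^ n₂ := by
    set d : Fin Y := ⟨0, hY⟩ with hd
    set G : Finset (Fin U × Fin U → Fin Y) :=
      Fintype.piFinset (fun p => if p ∈ A₁ then (univ : Finset (Fin Y)) else {d}) with hG
    have hsub : E₂ ⊆ G.biUnion (fun g => E₂.filter (fun S => ∀ p ∈ A₁, S p = g p)) := by
      intro S hS
      refine Finset.mem_biUnion.mpr ⟨fun p => if p ∈ A₁ then S p else d, ?_, ?_⟩
      · rw [hG, Fintype.mem_piFinset]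
        intro p
        by_cases hp : p ∈ A₁ <;> simp [hp]
      · rw [mem_filter]
        exact ⟨hS, fun p hp => by simp [hp]⟩
    refine (Finset.card_le_card hsub).trans ((Finset.card_biUnion_le).trans ?_)
    have hfib : ∀ g ∈ G, (E₂.filter (fun S => ∀ p ∈ A₁, S p = g p)).card
        ≤ (Y - (m+1)) ^ n₂ := by
      intro g _
      rcases Finset.eq_empty_or_nonempty (E₂.filter (fun S => ∀ p ∈ A₁, S p = g p))
        with he | ⟨S₀, hS₀⟩
      · rw [he]; exact Nat.zero_le _
      · have hS₀' := Finset.mem_filter.mp hS₀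
        have hS₀E := Finset.mem_filter.mp hS₀'.1
        have himg : A₁.image g = A₁.image S₀ :=
          Finset.image_congr (fun p hp => (hS₀'.2 p hp).symm)
        have hk : m + 1 ≤ (A₁.image g).card := by rw [himg]; exact hS₀E.2.1
        have hsub2 : E₂.filter (fun S => ∀ p ∈ A₁, S p = g p)
            ⊆ Fintype.piFinset (fun p => if p ∈ A₁ then {g p} else (A₁.image g)ᶜ) := by
          intro S hS
          have hS' := Finset.mem_filter.mp hS
          have hSE := Finset.mem_filter.mp hS'.1
          rw [Fintype.mem_piFinset]
          intro p
          split
          · next hp => simpa using hS'.2 p hp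
          · next hp =>
            have hp₂ : p ∈ A₂ := by rw [hsplit, Finset.mem_compl]; exact hp
            have himg' : A₁.image g = A₁.image S :=
              Finset.image_congr (fun q hq => (hS'.2 q hq).symm)
            rw [Finset.mem_compl, himg']
            intro hmem
            exact (Finset.disjoint_left.mp hSE.2.2) hmem (Finset.mem_image_of_mem S hp₂)
        refine (Finset.card_le_card hsub2).trans ?_
        rw [piFinset_ite_card', ← hsplit]
        have hcompl : ((A₁.image g)ᶜ : Finset (Fin Y)).card = Y - (A₁.image g).card := by
          rw [Finset.card_compl]; simp
        rw [hcompl, ← hn₂]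
        exact Nat.pow_le_pow_left (Nat.sub_le_sub_left hk Y) _
    calc (∑ g ∈ G, (E₂.filter (fun S => ∀ p ∈ A₁, S p = g p)).card)
        ≤ G.card * ((Y - (m+1)) ^ n₂) := by
          simpa using Finset.sum_le_card_nsmul G _ _ hfib
      _ ≤ Y ^ n₁ * (Y - (m+1)) ^ n₂ := by
          apply Nat.mul_le_mul_right
          rw [hG, piFinset_ite_card, ← hsplit]
          simp [hn₁]
  -- combine counting bounds
  have hYpos : (0:ℝ) < Y := by exact_mod_cast hY
  have hm1Y : ((m:ℝ) + 1) ≤ (Y:ℝ) := by exact_mod_cast hmY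
  have hEcard : (E.card : ℝ) ≤ (Y.choose m : ℝ) * ((m:ℝ) ^ n₁ * (Y:ℝ) ^ n₂)
      + (Y:ℝ) ^ n₁ * ((Y:ℝ) - ((m:ℝ) + 1)) ^ n₂ := by
    have h := (Finset.card_le_card hsubE).trans (Finset.card_union_le E₁ E₂)
    have h2 := h.trans (Nat.add_le_add hE₁card hE₂card)
    have hcast : (((Y - (m+1) : ℕ)) : ℝ) = (Y:ℝ) - ((m:ℝ) + 1) := by
      push_cast [hmY]
      ring
    calc (E.card : ℝ) ≤ ((Y.choose m * (m ^ n₁ * Y ^ n₂) + Y ^ n₁ * (Y - (m+1)) ^ n₂ : ℕ) : ℝ) := by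
          exact_mod_cast h2
      _ = (Y.choose m : ℝ) * ((m:ℝ) ^ n₁ * (Y:ℝ) ^ n₂)
          + (Y:ℝ) ^ n₁ * ((Y:ℝ) - ((m:ℝ) + 1)) ^ n₂ := by
          push_cast [hcast]
          ring
  set t1 : ℝ := (Y.choose m : ℝ) * ((m:ℝ)/(Y:ℝ)) ^ n₁ with ht1def
  set t2 : ℝ := (((Y:ℝ) - ((m:ℝ) + 1))/(Y:ℝ)) ^ n₂ with ht2def
  have hquot : (E.card : ℝ) / (Y:ℝ) ^ (U ^ 2) ≤ t1 + t2 := by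
    have hYpow : ((Y:ℝ)) ^ (U ^ 2) = (Y:ℝ) ^ n₁ * (Y:ℝ) ^ n₂ := by
      rw [← pow_add, hcard]
    rw [hYpow, div_le_iff₀ (by positivity)]
    have e1 : (t1 + t2) * ((Y:ℝ) ^ n₁ * (Y:ℝ) ^ n₂)
        = (Y.choose m : ℝ) * ((m:ℝ) ^ n₁ * (Y:ℝ) ^ n₂)
          + (Y:ℝ) ^ n₁ * ((Y:ℝ) - ((m:ℝ) + 1)) ^ n₂ := by
      rw [ht1def, ht2def, div_pow, div_pow]
      field_simp
    rw [e1]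
    exact hEcard
  -- the numeric constant : 1/3 ≤ exp (-(3/4))
  have hexp34 : Real.exp ((3:ℝ)/4) ≤ 3 := by
    have h1 : Real.exp ((3:ℝ)/4) ≤ Real.exp 1 := Real.exp_le_exp.mpr (by norm_num)
    have h2 := Real.exp_one_lt_d9
    linarith
  have hthird : (1:ℝ)/3 ≤ Real.exp (-(3/4)) := by
    rw [Real.exp_neg, inv_eq_one_div]
    exact one_div_le_one_div_of_le (Real.exp_pos _) hexp34
  -- bound t1
  have ht1 : t1 ≤ Real.exp (-(c * (U:ℝ)^2/6)) := by
    rcases Nat.eq_zero_or_pos m with hm0 | hmpos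
    · have : t1 = 0 := by
        rw [ht1def, hm0]
        simp [zero_pow hn₁pos.ne']
      rw [this]
      exact (Real.exp_pos _).le
    · have hmposR : (0:ℝ) < m := by exact_mod_cast hmpos
      have hchoose : (Y.choose m : ℝ) * (m.factorial : ℝ) ≤ (Y:ℝ) ^ m := by
        have h := Nat.descFactorial_le_pow Y m
        rw [Nat.descFactorial_eq_factorial_mul_choose] at h
        rw [Nat.mul_comm] at h
        exact_mod_cast h
      have hfact : (m:ℝ) ^ m ≤ Real.exp m * (m.factorial : ℝ) := by
        have h := Real.pow_div_factorial_le_exp (x := (m:ℝ)) (by positivity) m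
        have hf : (0:ℝ) < (m.factorial : ℝ) := by exact_mod_cast m.factorial_pos
        rw [div_le_iff₀ hf] at h
        exact h
      have hchoose2 : (Y.choose m : ℝ) ≤ (Y:ℝ) ^ m * Real.exp m / (m:ℝ) ^ m := by
        rw [le_div_iff₀ (by positivity)]
        have hf : (0:ℝ) < (m.factorial : ℝ) := by exact_mod_cast m.factorial_pos
        have hcnn : (0:ℝ) ≤ (Y.choose m : ℝ) := Nat.cast_nonneg _
        calc (Y.choose m : ℝ) * (m:ℝ) ^ m
            ≤ (Y.choose m : ℝ) * (Real.exp m * (m.factorial : ℝ)) :=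
              mul_le_mul_of_nonneg_left hfact hcnn
          _ = ((Y.choose m : ℝ) * (m.factorial : ℝ)) * Real.exp m := by ring
          _ ≤ (Y:ℝ) ^ m * Real.exp m := mul_le_mul_of_nonneg_right hchoose (Real.exp_pos _).le
      have hsplitpow : ((m:ℝ)/(Y:ℝ)) ^ n₁ = ((m:ℝ)/(Y:ℝ)) ^ m * ((m:ℝ)/(Y:ℝ)) ^ (n₁ - m) := by
        rw [← pow_add]
        congr 1
        omega
      have step1 : t1 ≤ Real.exp m * ((m:ℝ)/(Y:ℝ)) ^ (n₁ - m) := by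
        have e2 : (Y:ℝ) ^ m * Real.exp m / (m:ℝ) ^ m
            * (((m:ℝ)/(Y:ℝ)) ^ m * ((m:ℝ)/(Y:ℝ)) ^ (n₁ - m))
            = Real.exp m * ((m:ℝ)/(Y:ℝ)) ^ (n₁ - m) := by
          rw [div_pow]
          field_simp
        calc t1 ≤ ((Y:ℝ) ^ m * Real.exp m / (m:ℝ) ^ m) * ((m:ℝ)/(Y:ℝ)) ^ n₁ := by
              apply mul_le_mul_of_nonneg_right hchoose2 (by positivity)
          _ = Real.exp m * ((m:ℝ)/(Y:ℝ)) ^ (n₁ - m) := by rw [hsplitpow, e2]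
      have hbase : (m:ℝ)/(Y:ℝ) ≤ Real.exp (-(3/4)) := by
        refine le_trans ?_ hthird
        rw [div_le_div_iff₀ hYpos (by norm_num)]
        linarith
      have hpow : ((m:ℝ)/(Y:ℝ)) ^ (n₁ - m) ≤ Real.exp (-(3/4)) ^ (n₁ - m) :=
        pow_le_pow_left₀ (by positivity) hbase _
      have step2 : t1 ≤ Real.exp ((m:ℝ) + ((n₁ - m : ℕ):ℝ) * (-(3/4))) := by
        rw [Real.exp_add]
        calc t1 ≤ Real.exp m * ((m:ℝ)/(Y:ℝ)) ^ (n₁ - m) := step1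
          _ ≤ Real.exp m * Real.exp (-(3/4)) ^ (n₁ - m) := by
              apply mul_le_mul_of_nonneg_left hpow (Real.exp_pos _).le
          _ = Real.exp m * Real.exp (((n₁ - m : ℕ):ℝ) * (-(3/4))) := by
              rw [Real.exp_nat_mul]
      refine step2.trans (Real.exp_le_exp.mpr ?_)
      have hcastsub : ((n₁ - m : ℕ):ℝ) = (n₁:ℝ) - (m:ℝ) := by
        push_cast [hmn₁]
        ring
      rw [hcastsub]
      linarith
  -- bound t2
  have ht2 : t2 ≤ Real.exp (-M) := by
    have hbase2 : (0:ℝ) ≤ ((Y:ℝ) - ((m:ℝ)+1))/(Y:ℝ) := by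
      apply div_nonneg _ hYpos.le
      linarith
    have h12 : ((Y:ℝ) - ((m:ℝ)+1))/(Y:ℝ) ≤ Real.exp (-(((m:ℝ)+1)/(Y:ℝ))) := by
      have h := Real.add_one_le_exp (-(((m:ℝ)+1)/(Y:ℝ)))
      have e3 : ((Y:ℝ) - ((m:ℝ)+1))/(Y:ℝ) = 1 - ((m:ℝ)+1)/(Y:ℝ) := by
        field_simp
      rw [e3]
      linarith
    have hMle : M ≤ ((n₂:ℝ)) * (((m:ℝ)+1)/(Y:ℝ)) := by
      rcases le_total ((Y:ℝ)/3) (c * (U:ℝ)^2/3) with hmin | hmin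
      · have hm1' : (Y:ℝ)/3 < (m:ℝ)+1 := by
          rw [min_eq_left hmin] at hm1
          exact hm1
        have h1 : (1:ℝ)/3 ≤ ((m:ℝ)+1)/(Y:ℝ) := by
          rw [div_le_div_iff₀ (by norm_num) hYpos]
          linarith
        have h2 : c * (U:ℝ)^2 * (1/3) ≤ (n₂:ℝ) * (((m:ℝ)+1)/(Y:ℝ)) :=
          mul_le_mul hbal₂ h1 (by norm_num) (Nat.cast_nonneg _)
        calc M ≤ c * (U:ℝ)^2/6 := min_le_left _ _
          _ ≤ c * (U:ℝ)^2 * (1/3) := by linarith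
          _ ≤ _ := h2
      · have hm1' : c * (U:ℝ)^2/3 < (m:ℝ)+1 := by
          rw [min_eq_right hmin] at hm1
          exact hm1
        have h1 : (c * (U:ℝ)^2/3)/(Y:ℝ) ≤ ((m:ℝ)+1)/(Y:ℝ) := by
          gcongr
        have h2 : c * (U:ℝ)^2 * ((c * (U:ℝ)^2/3)/(Y:ℝ)) ≤ (n₂:ℝ) * (((m:ℝ)+1)/(Y:ℝ)) :=
          mul_le_mul hbal₂ h1 (by positivity) (Nat.cast_nonneg _)
        calc M ≤ c^2 * (U:ℝ)^4 / (3 * (Y:ℝ)) := min_le_right _ _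
          _ = c * (U:ℝ)^2 * ((c * (U:ℝ)^2/3)/(Y:ℝ)) := by
              field_simp
          _ ≤ _ := h2
    calc t2 ≤ Real.exp (-(((m:ℝ)+1)/(Y:ℝ))) ^ n₂ := pow_le_pow_left₀ hbase2 h12 _
      _ = Real.exp ((n₂:ℝ) * (-(((m:ℝ)+1)/(Y:ℝ)))) := by rw [← Real.exp_nat_mul]
      _ ≤ Real.exp (-M) := by
          apply Real.exp_le_exp.mpr
          have : (n₂:ℝ) * (-(((m:ℝ)+1)/(Y:ℝ))) = -((n₂:ℝ) * (((m:ℝ)+1)/(Y:ℝ))) := by ring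
          rw [this]
          linarith
  have ht1' : t1 ≤ Real.exp (-M) := by
    refine ht1.trans (Real.exp_le_exp.mpr ?_)
    have := min_le_left (c * (U:ℝ)^2/6) (c^2 * (U:ℝ)^4 / (3 * (Y:ℝ)))
    rw [← hM] at this
    linarith
  rw [hNat]
  calc (E.card : ℝ) / (Y:ℝ) ^ (U ^ 2) ≤ t1 + t2 := hquot
    _ ≤ 2 * Real.exp (-M) := by linarith
end

section
/- Fix 0 < δ < 1 − 1/W and a fixed matrix A_δ ∈ W^{V₁×V₂} with V₁,V₂ ≤ U. Let A be a U×U random matrix with entries i.i.d. uniform over a set of size W. Then the probability that A_δ is a δ-approximation of A is at most exp(2U ln U − αU²), where α = (1−δ)ln(W(1−δ)) − (1−δ). -/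
open Finset

-- Lemma 1: MGF-style product identity
lemma sum_prod_ite {ι : Type*} [Fintype ι] [DecidableEq ι] (W : ℕ) (hW : 0 < W)
    (B : ι → Fin W) (lam : ℝ) :
    ∑ g : ι → Fin W, ∏ i, (if g i = B i then lam else 1) =
      (lam + (W : ℝ) - 1) ^ (Fintype.card ι) := by
  classical
  have h1 : ∀ b : Fin W, (∑ w : Fin W, if w = b then lam else 1) = lam + (W : ℝ) - 1 := by
    intro b
    have : ∀ w : Fin W, (if w = b then lam else 1) = (if w = b then lam - 1 else 0) + 1 := by
      intro w; split <;> ring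
    rw [Finset.sum_congr rfl (fun w _ => this w), Finset.sum_add_distrib,
      Finset.sum_ite_eq' univ b (fun _ => lam - 1)]
    simp [Finset.card_univ]
    ring
  calc ∑ g : ι → Fin W, ∏ i, (if g i = B i then lam else 1)
      = ∏ i : ι, ∑ w : Fin W, (if w = B i then lam else 1) := by
        rw [Finset.prod_univ_sum]
        simp
    _ = ∏ i : ι, (lam + (W:ℝ) - 1) := by
        exact Finset.prod_congr rfl (fun i _ => h1 (B i))
    _ = (lam + (W : ℝ) - 1) ^ (Fintype.card ι) := by
        rw [Finset.prod_const, Finset.card_univ]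

lemma chernoff_count (U W : ℕ) (δ lam : ℝ) (hlam : 1 ≤ lam) (hW : 0 < W)
    (B : Fin U → Fin U → Fin W) :
    ((univ.filter (fun A : Fin U → Fin U → Fin W =>
        ((univ.filter (fun p : Fin U × Fin U => A p.1 p.2 ≠ B p.1 p.2)).card : ℝ)
          ≤ δ * (U:ℝ) ^ 2)).card : ℝ) * lam ^ ((1 - δ) * (U:ℝ) ^ 2)
      ≤ (lam + (W:ℝ) - 1) ^ (U * U) := by
  classical
  have hlam0 : (0:ℝ) < lam := lt_of_lt_of_le one_pos hlam
  set m : (Fin U → Fin U → Fin W) → ℕ :=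
    fun A => (univ.filter (fun p : Fin U × Fin U => A p.1 p.2 = B p.1 p.2)).card with hm
  -- total sum identity
  have htot : ∑ A : Fin U → Fin U → Fin W, lam ^ (m A) = (lam + (W:ℝ) - 1) ^ (U * U) := by
    have h1 : ∀ A : Fin U → Fin U → Fin W,
        lam ^ (m A) = ∏ p : Fin U × Fin U, (if A p.1 p.2 = B p.1 p.2 then lam else 1) := by
      intro A
      rw [Finset.prod_ite, Finset.prod_const, Finset.prod_const, one_pow, mul_one]
    rw [Finset.sum_congr rfl (fun A _ => h1 A)]
    have e := Equiv.curry (Fin U) (Fin U) (Fin W)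
    rw [← Equiv.sum_comp (Equiv.curry (Fin U) (Fin U) (Fin W))
      (fun A : Fin U → Fin U → Fin W => ∏ p : Fin U × Fin U,
        (if A p.1 p.2 = B p.1 p.2 then lam else 1))]
    have := sum_prod_ite W hW (fun p : Fin U × Fin U => B p.1 p.2) lam
    simpa [Equiv.curry] using this
  -- each bad A has m A large
  have hsub : ∀ A ∈ (univ.filter (fun A : Fin U → Fin U → Fin W =>
        ((univ.filter (fun p : Fin U × Fin U => A p.1 p.2 ≠ B p.1 p.2)).card : ℝ)
          ≤ δ * (U:ℝ) ^ 2)),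
      lam ^ ((1 - δ) * (U:ℝ) ^ 2) ≤ lam ^ (m A) := by
    intro A hA
    rw [Finset.mem_filter] at hA
    have hsplit : m A + (univ.filter (fun p : Fin U × Fin U =>
        A p.1 p.2 ≠ B p.1 p.2)).card = U * U := by
      rw [hm]
      have := Finset.card_filter_add_card_filter_not
        (s := (univ : Finset (Fin U × Fin U)))
        (p := fun p : Fin U × Fin U => A p.1 p.2 = B p.1 p.2)
      simpa [Finset.card_univ] using this
    have hmA : (1 - δ) * (U:ℝ) ^ 2 ≤ (m A : ℝ) := by
      have h2 : (m A : ℝ) + ((univ.filter (fun p : Fin U × Fin U =>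
          A p.1 p.2 ≠ B p.1 p.2)).card : ℝ) = (U:ℝ) * U := by exact_mod_cast congrArg (Nat.cast : ℕ → ℝ) hsplit
      have : (U:ℝ) ^ 2 = (U:ℝ) * U := sq (U:ℝ) ▸ by ring
      nlinarith [hA.2]
    calc lam ^ ((1 - δ) * (U:ℝ) ^ 2) ≤ lam ^ ((m A : ℝ)) :=
          Real.rpow_le_rpow_of_exponent_le hlam hmA
      _ = lam ^ (m A) := Real.rpow_natCast lam (m A)
  calc ((univ.filter _).card : ℝ) * lam ^ ((1 - δ) * (U:ℝ) ^ 2)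
      = ∑ _A ∈ (univ.filter (fun A : Fin U → Fin U → Fin W =>
          ((univ.filter (fun p : Fin U × Fin U => A p.1 p.2 ≠ B p.1 p.2)).card : ℝ)
            ≤ δ * (U:ℝ) ^ 2)), lam ^ ((1 - δ) * (U:ℝ) ^ 2) := by
        rw [Finset.sum_const, nsmul_eq_mul]
    _ ≤ ∑ A ∈ (univ.filter (fun A : Fin U → Fin U → Fin W =>
          ((univ.filter (fun p : Fin U × Fin U => A p.1 p.2 ≠ B p.1 p.2)).card : ℝ)
            ≤ δ * (U:ℝ) ^ 2)), lam ^ (m A) := Finset.sum_le_sum hsub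
    _ ≤ ∑ A : Fin U → Fin U → Fin W, lam ^ (m A) := by
        apply Finset.sum_le_sum_of_subset_of_nonneg (Finset.filter_subset _ _)
        intro A _ _; positivity
    _ = (lam + (W:ℝ) - 1) ^ (U * U) := htot

/-- Fix `0 < δ < 1 - 1/W` and a matrix `A_δ ∈ W^{V₁×V₂}` with `V₁, V₂ ≤ U`.
For a `U × U` random matrix `A` with entries i.i.d. uniform over an alphabet of size `W`, the
probability that `A_δ` is a `δ`-approximation of `A` is at most `exp(2U ln U - αU²)` with
`α = (1-δ)ln(W(1-δ)) - (1-δ)`. -/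
theorem approximation_probability
    (U W V₁ V₂ : ℕ) (hW : 0 < W) (hV₁ : V₁ ≤ U) (hV₂ : V₂ ≤ U)
    (δ : ℝ) (hδ0 : 0 < δ) (hδ1 : δ < 1 - 1 / (W : ℝ))
    (Aδ : Fin V₁ → Fin V₂ → Fin W)
    (α : ℝ) (hα : α = (1 - δ) * Real.log ((W : ℝ) * (1 - δ)) - (1 - δ)) :
    (Nat.card {A : Fin U → Fin U → Fin W //
        ∃ (f₁ : Fin U → Fin V₁) (f₂ : Fin U → Fin V₂),
          ((Finset.univ.filter
              (fun p : Fin U × Fin U => A p.1 p.2 ≠ Aδ (f₁ p.1) (f₂ p.2))).card : ℝ)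
            ≤ δ * (U : ℝ) ^ 2} : ℝ) / (W : ℝ) ^ (U ^ 2) ≤
      Real.exp (2 * (U : ℝ) * Real.log U - α * (U : ℝ) ^ 2) := by
  classical
  have hWR : (0:ℝ) < (W:ℝ) := by exact_mod_cast hW
  have hWinv : (0:ℝ) < 1 / (W:ℝ) := by positivity
  have h1δ : (0:ℝ) < 1 - δ := by linarith
  set lam : ℝ := (W:ℝ) * (1 - δ) with hlamdef
  have hlam1 : 1 < lam := by
    rw [hlamdef]
    have := (div_lt_iff₀ hWR).mp (by linarith : 1 / (W:ℝ) < 1 - δ)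
    linarith
  have hlam0 : (0:ℝ) < lam := lt_trans one_pos hlam1
  set r : ℝ := (1 - δ) * (U:ℝ) ^ 2 with hr
  have hrpos : (0:ℝ) < lam ^ r := Real.rpow_pos_of_pos hlam0 r
  set P : (Fin U → Fin U → Fin W) → Prop := fun A =>
    ∃ (f₁ : Fin U → Fin V₁) (f₂ : Fin U → Fin V₂),
      ((Finset.univ.filter
          (fun p : Fin U × Fin U => A p.1 p.2 ≠ Aδ (f₁ p.1) (f₂ p.2))).card : ℝ)
        ≤ δ * (U : ℝ) ^ 2 with hP
  set Q : (Fin U → Fin V₁) → (Fin U → Fin V₂) → (Fin U → Fin U → Fin W) → Prop :=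
    fun f₁ f₂ A =>
      ((Finset.univ.filter
          (fun p : Fin U × Fin U => A p.1 p.2 ≠ Aδ (f₁ p.1) (f₂ p.2))).card : ℝ)
        ≤ δ * (U : ℝ) ^ 2 with hQ
  -- Step 1: Nat.card = filter card
  have hcard : (Nat.card {A : Fin U → Fin U → Fin W // P A} : ℝ)
      = ((univ.filter P).card : ℝ) := by
    rw [Nat.card_eq_fintype_card, Fintype.card_subtype]
  -- Step 2: union bound
  have hunion : ((univ.filter P).card : ℝ) ≤
      ∑ f₁ : Fin U → Fin V₁, ∑ f₂ : Fin U → Fin V₂,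
        ((univ.filter (Q f₁ f₂)).card : ℝ) := by
    have hsub : univ.filter P ⊆
        Finset.biUnion univ (fun f₁ : Fin U → Fin V₁ =>
          Finset.biUnion univ (fun f₂ : Fin U → Fin V₂ => univ.filter (Q f₁ f₂))) := by
      intro A hA
      simp only [mem_filter, mem_univ, true_and, mem_biUnion] at *
      obtain ⟨f₁, f₂, h⟩ := hA
      exact ⟨f₁, f₂, h⟩
    have h1 := Finset.card_le_card hsub
    have h2 := Finset.card_biUnion_le (s := (univ : Finset (Fin U → Fin V₁)))
      (t := fun f₁ => Finset.biUnion univ (fun f₂ : Fin U → Fin V₂ => univ.filter (Q f₁ f₂)))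
    have h3 : ∑ f₁ : Fin U → Fin V₁,
        (Finset.biUnion univ (fun f₂ : Fin U → Fin V₂ => univ.filter (Q f₁ f₂))).card ≤
        ∑ f₁ : Fin U → Fin V₁, ∑ f₂ : Fin U → Fin V₂, (univ.filter (Q f₁ f₂)).card :=
      Finset.sum_le_sum (fun f₁ _ => Finset.card_biUnion_le)
    have := le_trans h1 (le_trans h2 h3)
    calc ((univ.filter P).card : ℝ) ≤
        ((∑ f₁ : Fin U → Fin V₁, ∑ f₂ : Fin U → Fin V₂, (univ.filter (Q f₁ f₂)).card : ℕ) : ℝ) :=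
          by exact_mod_cast this
      _ = _ := by push_cast; rfl
  -- Step 3: per-pair bound
  set C : ℝ := (lam + (W:ℝ) - 1) ^ (U * U) / lam ^ r with hC
  have hpair : ∀ (f₁ : Fin U → Fin V₁) (f₂ : Fin U → Fin V₂),
      ((univ.filter (Q f₁ f₂)).card : ℝ) ≤ C := by
    intro f₁ f₂
    rw [hC, le_div_iff₀ hrpos]
    exact chernoff_count U W δ lam (le_of_lt hlam1) hW (fun u v => Aδ (f₁ u) (f₂ v))
  have hsum : ((univ.filter P).card : ℝ) ≤ ((V₁:ℝ) ^ U * (V₂:ℝ) ^ U) * C := by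
    have hCpos : 0 ≤ C := by
      rw [hC]
      apply div_nonneg _ (le_of_lt hrpos)
      apply pow_nonneg; linarith
    calc ((univ.filter P).card : ℝ) ≤
        ∑ f₁ : Fin U → Fin V₁, ∑ f₂ : Fin U → Fin V₂,
          ((univ.filter (Q f₁ f₂)).card : ℝ) := hunion
      _ ≤ ∑ _f₁ : Fin U → Fin V₁, ∑ _f₂ : Fin U → Fin V₂, C := by
          apply Finset.sum_le_sum; intro f₁ _
          exact Finset.sum_le_sum (fun f₂ _ => hpair f₁ f₂)
      _ = ((V₁:ℝ) ^ U * (V₂:ℝ) ^ U) * C := by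
          simp [Finset.sum_const, Fintype.card_fun]
          ring
  -- Step 4: map-count bound
  have hmaps : (V₁:ℝ) ^ U * (V₂:ℝ) ^ U ≤ Real.exp (2 * (U:ℝ) * Real.log U) := by
    have h1 : (V₁:ℝ) ^ U * (V₂:ℝ) ^ U ≤ (U:ℝ) ^ (2 * U) := by
      have a1 : (V₁:ℝ) ^ U ≤ (U:ℝ) ^ U :=
        pow_le_pow_left₀ (by positivity) (by exact_mod_cast hV₁) U
      have a2 : (V₂:ℝ) ^ U ≤ (U:ℝ) ^ U :=
        pow_le_pow_left₀ (by positivity) (by exact_mod_cast hV₂) U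
      calc (V₁:ℝ) ^ U * (V₂:ℝ) ^ U ≤ (U:ℝ) ^ U * (U:ℝ) ^ U :=
            mul_le_mul a1 a2 (by positivity) (by positivity)
        _ = (U:ℝ) ^ (2 * U) := by rw [← pow_add]; ring_nf
    rcases Nat.eq_zero_or_pos U with hU | hU
    · subst hU; simpa using h1
    · have hUpos : (0:ℝ) < U := by exact_mod_cast hU
      have hlg : Real.log ((U:ℝ) ^ (2 * U)) = 2 * (U:ℝ) * Real.log U := by
        rw [Real.log_pow]; push_cast; ring
      have : (U:ℝ) ^ (2 * U) = Real.exp (2 * (U:ℝ) * Real.log U) := by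
        rw [← hlg, Real.exp_log (by positivity)]
      linarith [h1, this.ge, this.le]
  -- Step 5: analytic bound on C / W^n
  have hCbound : C / (W:ℝ) ^ (U ^ 2) ≤ Real.exp (-α * (U:ℝ) ^ 2) := by
    have hWn : (0:ℝ) < (W:ℝ) ^ (U ^ 2) := by positivity
    have hbase : lam + (W:ℝ) - 1 ≤ (W:ℝ) * Real.exp (1 - δ) := by
      have h1 : 1 + (lam - 1) / (W:ℝ) ≤ Real.exp ((lam - 1) / (W:ℝ)) := by
        have := Real.add_one_le_exp ((lam - 1) / (W:ℝ)); linarith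
      have h2 : Real.exp ((lam - 1) / (W:ℝ)) ≤ Real.exp (1 - δ) := by
        apply Real.exp_le_exp.mpr
        rw [hlamdef]
        rw [div_le_iff₀ hWR]
        nlinarith
      have h3 : lam + (W:ℝ) - 1 = (W:ℝ) * (1 + (lam - 1) / (W:ℝ)) := by
        field_simp
        ring
      rw [h3]
      calc (W:ℝ) * (1 + (lam - 1) / (W:ℝ)) ≤ (W:ℝ) * Real.exp ((lam - 1) / (W:ℝ)) :=
            mul_le_mul_of_nonneg_left h1 (le_of_lt hWR)
        _ ≤ (W:ℝ) * Real.exp (1 - δ) := mul_le_mul_of_nonneg_left h2 (le_of_lt hWR)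
    have hnum : (lam + (W:ℝ) - 1) ^ (U * U) ≤
        (W:ℝ) ^ (U ^ 2) * Real.exp ((1 - δ) * (U:ℝ) ^ 2) := by
      have hb0 : (0:ℝ) ≤ lam + (W:ℝ) - 1 := by linarith
      calc (lam + (W:ℝ) - 1) ^ (U * U) ≤ ((W:ℝ) * Real.exp (1 - δ)) ^ (U * U) :=
            pow_le_pow_left₀ hb0 hbase (U * U)
        _ = (W:ℝ) ^ (U * U) * Real.exp (1 - δ) ^ (U * U) := mul_pow _ _ _
        _ = (W:ℝ) ^ (U ^ 2) * Real.exp ((1 - δ) * (U:ℝ) ^ 2) := by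
            rw [← Real.exp_nat_mul]
            rw [show U * U = U ^ 2 from (sq U).symm]
            push_cast
            ring_nf
    have hlr : lam ^ r = Real.exp (Real.log lam * r) := Real.rpow_def_of_pos hlam0 r
    have hexp_eq : Real.exp ((1 - δ) * (U:ℝ) ^ 2) =
        Real.exp (-α * (U:ℝ) ^ 2) * Real.exp (Real.log lam * r) := by
      rw [← Real.exp_add]
      congr 1
      rw [hα, hr, hlamdef]
      ring
    rw [hC, div_div, div_le_iff₀ (by positivity)]
    calc (lam + (W:ℝ) - 1) ^ (U * U)
        ≤ (W:ℝ) ^ (U ^ 2) * Real.exp ((1 - δ) * (U:ℝ) ^ 2) := hnum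
      _ = Real.exp (-α * (U:ℝ) ^ 2) * (lam ^ r * (W:ℝ) ^ (U ^ 2)) := by
          rw [hexp_eq, hlr]; ring
  -- Combine
  have hfinal : ((univ.filter P).card : ℝ) / (W:ℝ) ^ (U ^ 2) ≤
      Real.exp (2 * (U:ℝ) * Real.log U) * Real.exp (-α * (U:ℝ) ^ 2) := by
    have hWn : (0:ℝ) < (W:ℝ) ^ (U ^ 2) := by positivity
    have hCpos : 0 ≤ C / (W:ℝ) ^ (U ^ 2) := by
      apply div_nonneg _ (le_of_lt hWn)
      rw [hC]; apply div_nonneg _ (le_of_lt hrpos); apply pow_nonneg; linarith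
    calc ((univ.filter P).card : ℝ) / (W:ℝ) ^ (U ^ 2)
        ≤ ((V₁:ℝ) ^ U * (V₂:ℝ) ^ U) * C / (W:ℝ) ^ (U ^ 2) := by
          gcongr
      _ = ((V₁:ℝ) ^ U * (V₂:ℝ) ^ U) * (C / (W:ℝ) ^ (U ^ 2)) := by ring
      _ ≤ Real.exp (2 * (U:ℝ) * Real.log U) * Real.exp (-α * (U:ℝ) ^ 2) := by
          apply mul_le_mul hmaps hCbound hCpos (Real.exp_nonneg _)
  rw [hcard]
  calc ((univ.filter P).card : ℝ) / (W:ℝ) ^ (U ^ 2)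
      ≤ Real.exp (2 * (U:ℝ) * Real.log U) * Real.exp (-α * (U:ℝ) ^ 2) := hfinal
    _ = Real.exp (2 * (U:ℝ) * Real.log U - α * (U:ℝ) ^ 2) := by
        rw [← Real.exp_add]; ring_nf
end
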